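/- Let n ≥ 2 be an integer and let X be a set with at least two elements. Define d(x1,...,xn) = |{x1,...,xn}| − 1 (the number of distinct values among the arguments minus one). Then d is an n-distance on X whose best constant is 1/(n−1): for all x1,...,xn,z ∈ X one has d(x1,...,xn) ≤ (1/(n−1)) · Σ_{i=1}^n d(x1,...,xn)_i^z, and equality holds with a nonconstant tuple whenever x1 ≠ x2 and x2 = x3 = ⋯ = xn = z. -/

import Mathlib

section aux
variable {n : ℕ} {X : Type*} [DecidableEq X]

lemma erase_subset_image (x : Fin n → X) (i : Fin n) (z : X) :
    ((Finset.univ.image x).erase (x i)) ⊆ Finset.univ.image (Function.update x i z) := by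
  intro a ha
  rw [Finset.mem_erase] at ha
  obtain ⟨hne, ha⟩ := ha
  rw [Finset.mem_image] at ha ⊢
  obtain ⟨j, _, hj⟩ := ha
  have hji : j ≠ i := by rintro rfl; exact hne hj.symm
  exact ⟨j, Finset.mem_univ _, by rw [Function.update_of_ne hji, hj]⟩

lemma L1 (x : Fin n → X) (i : Fin n) (z : X) :
    (Finset.univ.image x).card ≤ (Finset.univ.image (Function.update x i z)).card + 1 := by
  have h := Finset.card_le_card (erase_subset_image x i z)
  have h2 := Finset.card_erase_of_mem (Finset.mem_image_of_mem x (Finset.mem_univ i))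
  have h3 : 1 ≤ (Finset.univ.image x).card :=
    Finset.card_pos.mpr ⟨x i, Finset.mem_image_of_mem x (Finset.mem_univ i)⟩
  omega

lemma L2 (x : Fin n → X) (i : Fin n) (z : X) (j : Fin n) (hji : j ≠ i) (hxj : x j = x i) :
    (Finset.univ.image x).card ≤ (Finset.univ.image (Function.update x i z)).card := by
  apply Finset.card_le_card
  intro a ha
  rw [Finset.mem_image] at ha ⊢
  obtain ⟨m, _, hm⟩ := ha
  by_cases hmi : m = i
  · exact ⟨j, Finset.mem_univ _, by rw [Function.update_of_ne hji, hxj, ← hmi, hm]⟩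
  · exact ⟨m, Finset.mem_univ _, by rw [Function.update_of_ne hmi, hm]⟩

lemma L3 (x : Fin n → X) (i : Fin n) (z : X)
    (hz : z ∉ (Finset.univ.image x).erase (x i)) :
    (Finset.univ.image x).card ≤ (Finset.univ.image (Function.update x i z)).card := by
  have hsub : insert z ((Finset.univ.image x).erase (x i)) ⊆
      Finset.univ.image (Function.update x i z) := by
    rw [Finset.insert_subset_iff]
    refine ⟨?_, erase_subset_image x i z⟩
    exact Finset.mem_image.mpr ⟨i, Finset.mem_univ _, Function.update_self i z x⟩
  have hcard := Finset.card_le_card hsub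
  rw [Finset.card_insert_of_notMem hz] at hcard
  have h2 := Finset.card_erase_of_mem (Finset.mem_image_of_mem x (Finset.mem_univ i))
  have h3 : 1 ≤ (Finset.univ.image x).card :=
    Finset.card_pos.mpr ⟨x i, Finset.mem_image_of_mem x (Finset.mem_univ i)⟩
  omega

lemma count {c : Fin n → ℕ} {k : ℕ} (hn : 1 ≤ n) (T : Finset (Fin n)) (hT : T.card + 1 ≤ k)
    (h1 : ∀ i, i ∈ T → k ≤ c i + 1) (h2 : ∀ i, i ∉ T → k ≤ c i) :
    (n - 1) * k + 1 ≤ ∑ i, c i := by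
  have key : n * k ≤ (∑ i, c i) + T.card := by
    have : ∑ _i : Fin n, k ≤ ∑ i : Fin n, (c i + if i ∈ T then 1 else 0) := by
      apply Finset.sum_le_sum
      intro i _
      by_cases h : i ∈ T
      · simpa [h] using h1 i h
      · simpa [h] using h2 i h
    simpa [Finset.sum_add_distrib, Finset.sum_ite_mem, mul_comm] using this
  have hmul : (n - 1) * k + k = n * k := by
    rcases n with _ | m
    · omega
    · rw [Nat.succ_sub_one]; ring
  obtain ⟨a, ha⟩ : ∃ a, (n - 1) * k = a := ⟨_, rfl⟩
  rw [ha] at hmul ⊢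
  omega

lemma main_ineq (hn : 2 ≤ n) (x : Fin n → X) (z : X) :
    (n - 1) * (Finset.univ.image x).card + 1 ≤
      ∑ i : Fin n, (Finset.univ.image (Function.update x i z)).card := by
  classical
  have hk1 : 1 ≤ (Finset.univ.image x).card :=
    Finset.card_pos.mpr ⟨x ⟨0, by omega⟩, Finset.mem_image_of_mem x (Finset.mem_univ _)⟩
  set U : Finset (Fin n) := Finset.univ.filter (fun i => ∀ j, j ≠ i → x j ≠ x i) with hU
  have hUinj : Set.InjOn x U := by
    intro i hi i' hi' hx
    by_contra hne
    rw [hU, Finset.coe_filter] at hi'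
    exact hi'.2 i hne hx
  by_cases hz : z ∈ Finset.univ.image x
  · obtain ⟨m, _, hm⟩ := Finset.mem_image.mp hz
    by_cases hu : ∀ j, j ≠ m → x j ≠ x m
    · -- m is a unique index
      refine count (by omega) (U.erase m) ?_ (fun i _ => L1 x i z) ?_
      · have hmU : m ∈ U := by
          rw [hU, Finset.mem_filter]
          exact ⟨Finset.mem_univ _, hu⟩
        have := Finset.card_erase_of_mem hmU
        have hUcard : U.card ≤ (Finset.univ.image x).card := by
          apply Finset.card_le_card_of_injOn x _ hUinj
          intro a _
          exact Finset.mem_image_of_mem x (Finset.mem_univ a)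
        omega
      · intro i hi
        by_cases him : i = m
        · subst him
          apply L3
          rw [← hm]
          exact fun h => (Finset.mem_erase.mp h).1 rfl
        · have hiU : i ∉ U := fun h => hi (Finset.mem_erase.mpr ⟨him, h⟩)
          rw [hU] at hiU
          simp only [Finset.mem_filter, Finset.mem_univ, true_and] at hiU
          push_neg at hiU
          obtain ⟨j, hji, hxj⟩ := hiU
          exact L2 x i z j hji hxj
    · -- z is attained at least twice
      push_neg at hu
      obtain ⟨j₀, hj₀m, hxj₀⟩ := hu
      refine count (by omega) U ?_ (fun i _ => L1 x i z) ?_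
      · have hUcard : U.card ≤ ((Finset.univ.image x).erase z).card := by
          apply Finset.card_le_card_of_injOn x _ hUinj
          intro a ha
          rw [Finset.mem_coe, Finset.mem_erase]
          refine ⟨?_, Finset.mem_image_of_mem x (Finset.mem_univ a)⟩
          rw [hU] at ha
          simp only [Finset.mem_coe, Finset.mem_filter, Finset.mem_univ, true_and] at ha
          intro hxa
          by_cases ham : a = m
          · subst ham
            exact ha j₀ hj₀m hxj₀
          · exact ha m (fun h => ham h.symm) (by rw [hm, hxa])
        have := Finset.card_erase_of_mem hz
        omega
      · intro i hi
        rw [hU] at hi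
        simp only [Finset.mem_filter, Finset.mem_univ, true_and] at hi
        push_neg at hi
        obtain ⟨j, hji, hxj⟩ := hi
        exact L2 x i z j hji hxj
  · refine count (by omega) ∅ (by simpa using hk1) (by simp) ?_
    intro i _
    exact L3 x i z (fun h => hz (Finset.mem_of_mem_erase h))

end aux

theorem cardinality_n_distance (n : ℕ) (hn : 2 ≤ n) (X : Type*) [DecidableEq X]
    (hX : ∃ a b : X, a ≠ b)
    (d : (Fin n → X) → ℝ)
    (hd : ∀ x : Fin n → X, d x = (Finset.univ.image x).card - 1) :
    (∀ x : Fin n → X, 0 ≤ d x) ∧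
    (∀ x : Fin n → X, d x = 0 ↔ ∀ i j : Fin n, x i = x j) ∧
    (∀ (x : Fin n → X) (σ : Equiv.Perm (Fin n)), d (x ∘ σ) = d x) ∧
    (∀ (x : Fin n → X) (z : X),
      d x ≤ (1 / ((n : ℝ) - 1)) * ∑ i : Fin n, d (Function.update x i z)) ∧
    (∀ (x : Fin n → X) (z : X),
      x ⟨0, by omega⟩ ≠ x ⟨1, by omega⟩ →
      (∀ i : Fin n, i ≠ ⟨0, by omega⟩ → x i = z) →
      d x = (1 / ((n : ℝ) - 1)) * ∑ i : Fin n, d (Function.update x i z)) := by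
  have hn1 : (2:ℝ) ≤ (n:ℝ) := by exact_mod_cast hn
  have hcard : ∀ x : Fin n → X, 1 ≤ (Finset.univ.image x).card := fun x =>
    Finset.card_pos.mpr ⟨x ⟨0, by omega⟩, Finset.mem_image_of_mem x (Finset.mem_univ _)⟩
  have hcardR : ∀ x : Fin n → X, (1:ℝ) ≤ ((Finset.univ.image x).card : ℝ) := fun x => by
    exact_mod_cast hcard x
  refine ⟨?_, ?_, ?_, ?_, ?_⟩
  · intro x
    rw [hd]
    linarith [hcardR x]
  · intro x
    rw [hd]
    constructor
    · intro h i j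
      have hc : (Finset.univ.image x).card = 1 := by
        have h' : ((Finset.univ.image x).card : ℝ) = 1 := by linarith [hcardR x]
        exact_mod_cast h'
      obtain ⟨a, ha⟩ := Finset.card_eq_one.mp hc
      have hi := Finset.mem_image_of_mem x (Finset.mem_univ i)
      have hj := Finset.mem_image_of_mem x (Finset.mem_univ j)
      rw [ha, Finset.mem_singleton] at hi hj
      rw [hi, hj]
    · intro h
      have hxc : x = fun _ => x ⟨0, by omega⟩ := funext fun j => h j _
      have hne : (Finset.univ : Finset (Fin n)).Nonempty := ⟨⟨0, by omega⟩, Finset.mem_univ _⟩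
      rw [hxc, Finset.image_const hne, Finset.card_singleton]
      norm_num
  · intro x σ
    rw [hd, hd]
    have himg : Finset.univ.image (x ∘ σ) = Finset.univ.image x := by
      rw [← Finset.image_image, Finset.image_univ_equiv]
    rw [himg]
  · intro x z
    rw [hd]
    have key := main_ineq hn x z
    have hsum : ∑ i : Fin n, d (Function.update x i z) =
        (∑ i : Fin n, ((Finset.univ.image (Function.update x i z)).card : ℝ)) - n := by
      simp_rw [hd]
      rw [Finset.sum_sub_distrib, Finset.sum_const, Finset.card_univ, Fintype.card_fin]
      simp
    rw [hsum, one_div, inv_mul_eq_div, le_div_iff₀ (by linarith : (0:ℝ) < (n:ℝ) - 1)]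
    have key' : ((n:ℝ) - 1) * ((Finset.univ.image x).card : ℝ) + 1 ≤
        ∑ i : Fin n, ((Finset.univ.image (Function.update x i z)).card : ℝ) := by
      have h2 := (Nat.cast_le (α := ℝ)).mpr key
      push_cast [Nat.cast_sub (by omega : 1 ≤ n)] at h2
      exact h2
    nlinarith [key', hcardR x]
  · intro x z h01 hz
    have h10 : (⟨1, by omega⟩ : Fin n) ≠ ⟨0, by omega⟩ := by
      intro h
      have := congrArg Fin.val h
      simp at this
    have hx1 : x ⟨1, by omega⟩ = z := hz _ h10
    have hxz : x ⟨0, by omega⟩ ≠ z := by rw [← hx1]; exact h01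
    have himg : Finset.univ.image x = {x ⟨0, by omega⟩, z} := by
      ext a
      simp only [Finset.mem_image, Finset.mem_insert, Finset.mem_singleton]
      constructor
      · rintro ⟨j, -, rfl⟩
        by_cases hj : j = ⟨0, by omega⟩
        · left; rw [hj]
        · right; exact hz j hj
      · rintro (rfl | rfl)
        · exact ⟨_, Finset.mem_univ _, rfl⟩
        · exact ⟨⟨1, by omega⟩, Finset.mem_univ _, hx1⟩
    have hdx : d x = 1 := by
      rw [hd, himg, Finset.card_insert_of_notMem (by simpa using hxz), Finset.card_singleton]
      norm_num
    have hterm : ∀ i : Fin n, d (Function.update x i z) =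
        if i = (⟨0, by omega⟩ : Fin n) then 0 else 1 := by
      intro i
      by_cases hi : i = ⟨0, by omega⟩
      · rw [if_pos hi]
        have hconst : Function.update x i z = fun _ => z := by
          funext j
          by_cases hj : j = i
          · rw [hj, Function.update_self]
          · rw [Function.update_of_ne hj]
            exact hz j (by rw [← hi]; exact hj)
        have hne : (Finset.univ : Finset (Fin n)).Nonempty := ⟨⟨0, by omega⟩, Finset.mem_univ _⟩
        rw [hd, hconst, Finset.image_const hne, Finset.card_singleton]
        norm_num
      · rw [if_neg hi]
        have hupd : Function.update x i z = x := by
          rw [← hz i hi]; exact Function.update_eq_self i x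
        rw [hupd, hdx]
    rw [hdx, Finset.sum_congr rfl (fun i _ => hterm i)]
    have h1 : ∀ i : Fin n, (if i = (⟨0, by omega⟩ : Fin n) then (0:ℝ) else 1) =
        1 + (if i = (⟨0, by omega⟩ : Fin n) then (-1:ℝ) else 0) := by
      intro i; split <;> norm_num
    rw [Finset.sum_congr rfl (fun i _ => h1 i), Finset.sum_add_distrib, Finset.sum_const,
      Finset.card_univ, Fintype.card_fin,
      Finset.sum_ite_eq' Finset.univ (⟨0, by omega⟩ : Fin n) (fun _ => (-1:ℝ))]
    simp only [Finset.mem_univ, if_true, nsmul_eq_mul, mul_one]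
    rw [one_div, inv_mul_eq_div]
    rw [show (n:ℝ) + -1 = (n:ℝ) - 1 by ring]
    rw [div_self (by linarith : (n:ℝ) - 1 ≠ 0)]
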